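/- arXiv:2207.01675 — 2 statements merged into one kernel-verified Lean document; each statement's English description precedes it below -/
import Mathlib

section
/- Let N ≥ 1, 0 < r < N, s = N - r, d ≥ 0, ℓ an integer with d + ℓ + 1 ≥ 0. Let z_1, ..., z_N be the roots (in an algebraic closure of ℚ(q)) of the polynomial (z-1)^N - q z^{r-1} = 0. If d > s(ℓ+1), then the coefficient of q^d in the Schur polynomial s_λ(z_1, ..., z_N), where λ = ((d+ℓ+1)^s), is zero. -/
/- STATEMENT 10: For `N ≥ 1`, `0 < r < N`, `s = N - r`, `d ≥ 0`, `d + ℓ + 1 ≥ 0` and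
`d > s(ℓ+1)`, the coefficient of `q^d` in the Schur polynomial `s_λ(z_1,…,z_N)`,
`λ = ((d+ℓ+1)^s)`, vanishes.  Here, by Vieta for `(z-1)^N - q z^(r-1)`, the
elementary symmetric functions of the roots are `e_j = C(N,j)` for `j ≠ s+1` and
`e_{s+1} = C(N,s+1) + (-1)^s q`, and `s_λ` is the dual Jacobi–Trudi determinant
`det(e_{s - i + j})` of size `(d+ℓ+1) × (d+ℓ+1)` (conjugate partition `(s^(d+ℓ+1))`). -/

open Polynomial

/-- The elementary symmetric functions of the roots of `(z-1)^N - q z^(r-1)`,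
`s = N - r`, as polynomials in `q` over `ℚ`. -/
noncomputable def elemE (N s : ℕ) (j : ℤ) : Polynomial ℚ :=
  if j = (s : ℤ) + 1 then
    Polynomial.C (N.choose (s + 1) : ℚ) + Polynomial.C ((-1 : ℚ) ^ s) * Polynomial.X
  else if 0 ≤ j then Polynomial.C (N.choose j.toNat : ℚ) else 0

lemma elemE_natDegree_le (N s : ℕ) (j : ℤ) :
    (elemE N s j).natDegree ≤ if j = (s:ℤ)+1 then 1 else 0 := by
  unfold elemE
  split_ifs with h h2
  · compute_degree
  · simp
  · simp

lemma elemE_zero_of_neg (N s : ℕ) (j : ℤ) (hj : j < 0) : elemE N s j = 0 := by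
  unfold elemE
  rw [if_neg (by omega), if_neg (by omega)]

theorem coeff_qd_schur_vanishes (N r d : ℕ) (ℓ : ℤ) (hN : 1 ≤ N) (hr0 : 0 < r)
    (hrN : r < N) (hℓ : 0 ≤ (d : ℤ) + ℓ + 1) (hd : ((N : ℤ) - r) * (ℓ + 1) < d) :
    (Matrix.det (Matrix.of fun i j : Fin (((d : ℤ) + ℓ + 1).toNat) =>
        elemE N (N - r) ((N : ℤ) - (r : ℤ) - ((i : ℕ) + 1) + ((j : ℕ) + 1)))).coeff d
      = 0 := by
  have hsz : ((N - r : ℕ) : ℤ) = (N:ℤ) - r := by omega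
  set s := N - r with hs
  set n := ((d:ℤ)+ℓ+1).toNat with hn
  have hnz : (n:ℤ) = (d:ℤ)+ℓ+1 := Int.toNat_of_nonneg hℓ
  have hds : (s:ℤ) * (ℓ+1) < d := by rw [hsz]; exact hd
  rw [Matrix.det_apply, Polynomial.finset_sum_coeff]
  apply Finset.sum_eq_zero
  intro σ _
  have key : (∏ i : Fin n, (Matrix.of fun i j : Fin n =>
      elemE N s ((N:ℤ) - r - ((i:ℕ)+1) + ((j:ℕ)+1))) (σ i) i).coeff d = 0 := by
    have hentry : ∀ i : Fin n, (Matrix.of fun i j : Fin n =>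
        elemE N s ((N:ℤ) - r - ((i:ℕ)+1) + ((j:ℕ)+1))) (σ i) i
        = elemE N s ((s:ℤ) + i - σ i) := by
      intro i
      simp only [Matrix.of_apply]
      congr 1
      omega
    simp only [hentry]
    by_cases h0 : ∃ i : Fin n, elemE N s ((s:ℤ) + i - σ i) = 0
    · obtain ⟨i, hi⟩ := h0
      rw [Finset.prod_eq_zero (Finset.mem_univ i) hi]
      simp
    · push_neg at h0
      apply Polynomial.coeff_eq_zero_of_natDegree_lt
      set S : Finset (Fin n) := Finset.univ.filter (fun i : Fin n => (i:ℤ) - σ i = 1) with hS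
      have hcard : S.card < d := by
        by_contra hc
        push_neg at hc
        -- sum of i - σ i over univ is 0
        have hsum0 : ∑ i : Fin n, ((i:ℤ) - σ i) = 0 := by
          have h1 : ∑ i : Fin n, ((σ i : ℕ) : ℤ) = ∑ i : Fin n, ((i : ℕ) : ℤ) :=
            Equiv.sum_comp σ (fun i => ((i : ℕ) : ℤ))
          simp [Finset.sum_sub_distrib, h1]
        have hsplit := Finset.sum_filter_add_sum_filter_not Finset.univ
          (fun i : Fin n => (i:ℤ) - σ i = 1) (fun i : Fin n => (i:ℤ) - σ i)
        have hSsum : ∑ i ∈ S, ((i:ℤ) - σ i) = S.card := by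
          rw [Finset.sum_congr rfl (fun i hi => (Finset.mem_filter.mp hi).2)]
          simp
          rfl
        have hScsum : ∑ i ∈ Finset.univ.filter (fun i : Fin n => ¬((i:ℤ) - σ i = 1)),
            ((i:ℤ) - σ i) ≥ -(s:ℤ) * (Finset.univ.filter (fun i : Fin n => ¬((i:ℤ) - σ i = 1))).card := by
          have hb : ∀ i ∈ Finset.univ.filter (fun i : Fin n => ¬((i:ℤ) - σ i = 1)),
              -(s:ℤ) ≤ (i:ℤ) - σ i := by
            intro i _
            have hne := h0 i
            by_contra hlt
            push_neg at hlt
            exact hne (elemE_zero_of_neg N s _ (by omega))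
          have := Finset.card_nsmul_le_sum _ _ _ hb
          simpa [nsmul_eq_mul, mul_comm] using this
        have hcards : S.card + (Finset.univ.filter (fun i : Fin n => ¬((i:ℤ) - σ i = 1))).card = n := by
          rw [hS, Finset.card_filter_add_card_filter_not]
          simp
        -- combine
        have hb : (S.card : ℤ) ≤ (s:ℤ) * ((n:ℤ) - S.card) := by
          have := hsplit
          rw [hSsum] at this
          have h2 : (n:ℤ) - S.card = ((Finset.univ.filter (fun i : Fin n => ¬((i:ℤ) - σ i = 1))).card : ℤ) := by
            push_cast [← hcards]; ring
          rw [h2]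
          nlinarith [hScsum, hsum0, this]
        have hdc : (d:ℤ) ≤ S.card := by exact_mod_cast hc
        nlinarith [hb, hdc, hds, hnz]
      calc (∏ i : Fin n, elemE N s ((s:ℤ) + i - σ i)).natDegree
          ≤ ∑ i : Fin n, (elemE N s ((s:ℤ) + i - σ i)).natDegree :=
            Polynomial.natDegree_prod_le _ _
        _ ≤ ∑ i : Fin n, (if ((i:ℤ) - σ i = 1) then 1 else 0) := by
            apply Finset.sum_le_sum
            intro i _
            have hiff : ((s:ℤ) + i - σ i = (s:ℤ)+1) ↔ ((i:ℤ) - σ i = 1) := by omega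
            split_ifs with h1
            · exact le_trans (elemE_natDegree_le N s _) (by rw [if_pos (hiff.mpr h1)])
            · have := elemE_natDegree_le N s ((s:ℤ) + i - σ i)
              rwa [if_neg (fun hh => h1 (hiff.mp hh))] at this
        _ = S.card := by rw [hS, Finset.card_filter]
        _ < d := hcard
  rw [Polynomial.coeff_smul, key, smul_zero]
end

section
/- Let N ≥ 1, 0 ≤ s ≤ N, d ≥ 0. Let e_j (0 ≤ j ≤ N) be given by e_j = C(N,j) for j ≠ s+1 and e_{s+1} = C(N,s+1) + (-1)^s q (with e_j = 0 for j > N). Let λ = ((d+1)^s) and define s_λ via the Jacobi–Trudi formula in elementary symmetric functions, a (d+1)×(d+1) determinant. Then [q^d] s_λ = (-1)^{(s-1)d} C(N, s-d), where C(N, s-d) = 0 if s < d. Equivalently, the Euler characteristic χ(Quot_d(O^N, r), det O^{[d]}) from Corollary 4.1 with ℓ = 0 equals C(N, r+d). -/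
/- STATEMENT 11: For `N ≥ 1`, `0 ≤ s ≤ N`, `d ≥ 0`, with `e_j = C(N,j)` for
`j ≠ s+1` and `e_{s+1} = C(N,s+1) + (-1)^s q`, the dual Jacobi–Trudi determinant
for `λ = ((d+1)^s)`, i.e. the `(d+1)×(d+1)` determinant `det(e_{s-i+j})`, satisfies
`[q^d] s_λ = (-1)^((s-1)d) C(N, s-d)` (zero when `s < d`). -/

open Polynomial

lemma neg_one_pow_ne (s : ℕ) : ((-1 : ℚ) ^ s) ≠ 0 := pow_ne_zero _ (by norm_num)

lemma natDegree_elemE_le (N s : ℕ) (j : ℤ) :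
    (elemE N s j).natDegree ≤ if j = (s : ℤ) + 1 then 1 else 0 := by
  unfold elemE
  split_ifs with h1 h2
  · rw [add_comm]
    exact le_of_eq (Polynomial.natDegree_linear (neg_one_pow_ne s))
  · simp
  · simp

lemma perm_eq_of_eq_off {α : Type*} (f g : Equiv.Perm α) (a : α)
    (h : ∀ x, x ≠ a → f x = g x) : f = g := by
  have ha : f a = g a := by
    by_contra hne
    have h1 : g.symm (f a) ≠ a := by
      intro he
      apply hne
      have := congrArg g he
      rwa [Equiv.apply_symm_apply] at this
    have h2 := h _ h1
    rw [Equiv.apply_symm_apply] at h2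
    exact h1 (f.injective h2)
  ext x
  by_cases hx : x = a
  · subst hx; exact ha
  · exact h x hx

theorem coeff_qd_schur_rectangular (N s d : ℕ) (hN : 1 ≤ N) (hs : s ≤ N) :
    (Matrix.det (Matrix.of fun i j : Fin (d + 1) =>
        elemE N s ((s : ℤ) - ((i : ℕ) + 1) + ((j : ℕ) + 1)))).coeff d
      = (-1 : ℚ) ^ (((s : ℤ) - 1) * d) *
        (if d ≤ s then (N.choose (s - d) : ℚ) else 0) := by
  rw [← Matrix.det_transpose, Matrix.det_apply, Polynomial.finset_sum_coeff]
  simp only [Matrix.transpose_apply, Matrix.of_apply]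
  rw [Finset.sum_eq_single_of_mem (finRotate (d + 1)) (Finset.mem_univ _) ?van]
  case van =>
    intro σ _ hσ
    -- find a point off `last` where σ differs from finRotate
    have hex : ∃ i0 : Fin (d + 1), i0 ≠ Fin.last d ∧ (σ i0 : ℕ) ≠ (i0 : ℕ) + 1 := by
      by_contra hcon
      push_neg at hcon
      apply hσ
      apply perm_eq_of_eq_off σ (finRotate (d + 1)) (Fin.last d)
      intro x hx
      have hxd : (x : ℕ) < d := by
        have h1 : (x : ℕ) ≠ d := fun he => hx (Fin.ext (by simp [he]))
        omega
      have hval := hcon x hx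
      rw [finRotate_succ_apply]
      apply Fin.ext
      rw [hval, Fin.val_add_one_of_lt]
      rw [Fin.lt_iff_val_lt_val, Fin.val_last]
      exact hxd
    obtain ⟨i0, hi0l, hi0⟩ := hex
    have hd1 : 1 ≤ d := by
      by_contra hd
      push_neg at hd
      apply hi0l
      apply Fin.ext
      simp only [Fin.val_last]
      omega
    rw [Polynomial.coeff_smul]
    have hdeg : (∏ i : Fin (d + 1), elemE N s ((s : ℤ) - ((i : ℕ) + 1) + ((σ i : ℕ) + 1))).natDegree < d := by
      refine lt_of_le_of_lt (Polynomial.natDegree_prod_le _ _) ?_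
      have hle : ∀ i : Fin (d + 1),
          (elemE N s ((s : ℤ) - ((i : ℕ) + 1) + ((σ i : ℕ) + 1))).natDegree
            ≤ if (σ i : ℕ) = (i : ℕ) + 1 then 1 else 0 := by
        intro i
        refine le_trans (natDegree_elemE_le N s _) ?_
        by_cases h : (σ i : ℕ) = (i : ℕ) + 1
        · simp only [h]
          split_ifs <;> simp
        · have hne : ¬ ((s : ℤ) - ((i : ℕ) + 1) + ((σ i : ℕ) + 1) = (s : ℤ) + 1) := by
            intro heq
            apply h
            omega
          simp [hne, h]
      refine lt_of_le_of_lt (Finset.sum_le_sum fun i _ => hle i) ?_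
      rw [Finset.sum_boole]
      have hsub : (Finset.univ.filter (fun i : Fin (d+1) => (σ i : ℕ) = (i : ℕ) + 1))
          ⊆ (Finset.univ.erase (Fin.last d)).erase i0 := by
        intro x hx
        rw [Finset.mem_filter] at hx
        rw [Finset.mem_erase, Finset.mem_erase]
        refine ⟨?_, ?_, Finset.mem_univ _⟩
        · rintro rfl; exact hi0 hx.2
        · rintro rfl
          have := hx.2
          have hσx : (σ (Fin.last d) : ℕ) ≤ d := Nat.lt_succ_iff.mp (σ (Fin.last d)).isLt
          simp only [Fin.val_last] at this
          omega
      have hcard := Finset.card_le_card hsub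
      rw [Finset.card_erase_of_mem, Finset.card_erase_of_mem (Finset.mem_univ _)] at hcard
      · simp only [Finset.card_univ, Fintype.card_fin] at hcard
        simp only [Nat.cast_id]
        omega
      · rw [Finset.mem_erase]
        exact ⟨hi0l, Finset.mem_univ _⟩
    rw [Polynomial.coeff_eq_zero_of_natDegree_lt hdeg, smul_zero]
  -- main term
  have hprod : (∏ i : Fin (d + 1),
      elemE N s ((s : ℤ) - ((i : ℕ) + 1) + ((finRotate (d + 1) i : ℕ) + 1)))
      = (Polynomial.C ((-1 : ℚ) ^ s) * Polynomial.X
          + Polynomial.C (N.choose (s + 1) : ℚ)) ^ d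
        * Polynomial.C (if d ≤ s then (N.choose (s - d) : ℚ) else 0) := by
    rw [Fin.prod_univ_castSucc]
    congr 1
    · rw [show ((Polynomial.C ((-1 : ℚ) ^ s) * Polynomial.X
          + Polynomial.C (N.choose (s + 1) : ℚ)) ^ d)
          = ∏ _j : Fin d, (Polynomial.C ((-1 : ℚ) ^ s) * Polynomial.X
          + Polynomial.C (N.choose (s + 1) : ℚ)) by
          rw [Finset.prod_const, Finset.card_univ, Fintype.card_fin]]
      · apply Finset.prod_congr rfl
        intro j _
        have h1 : (finRotate (d + 1) (Fin.castSucc j) : ℕ) = (j : ℕ) + 1 := by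
          rw [finRotate_succ_apply, Fin.val_add_one_of_lt]
          · simp
          · rw [Fin.lt_iff_val_lt_val, Fin.val_last]
            simp [j.isLt]
        have h2 : (s : ℤ) - ((Fin.castSucc j : ℕ) + 1)
            + (((finRotate (d + 1) (Fin.castSucc j) : ℕ) : ℤ) + 1) = (s : ℤ) + 1 := by
          rw [h1]
          push_cast [Fin.coe_castSucc]
          ring
        rw [h2]
        unfold elemE
        rw [if_pos rfl, add_comm]
    · have h2 : (s : ℤ) - ((Fin.last d : ℕ) + 1) + ((finRotate (d + 1) (Fin.last d) : ℕ) + 1)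
          = (s : ℤ) - d := by
        rw [finRotate_last]
        simp only [Fin.val_last, Fin.val_zero]
        push_cast
        ring
      rw [h2]
      unfold elemE
      have hne : ¬ ((s : ℤ) - d = (s : ℤ) + 1) := by omega
      rw [if_neg hne]
      by_cases hds : d ≤ s
      · rw [if_pos (by omega), if_pos hds]
        have : ((s : ℤ) - d).toNat = s - d := by omega
        rw [this]
      · rw [if_neg (by omega), if_neg hds, map_zero]
  rw [hprod, sign_finRotate, Polynomial.coeff_smul, Polynomial.coeff_mul_C]
  have hc : ((Polynomial.C ((-1 : ℚ) ^ s) * Polynomial.X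
      + Polynomial.C (N.choose (s + 1) : ℚ)) ^ d).coeff d = ((-1 : ℚ) ^ s) ^ d := by
    have hx := Polynomial.coeff_pow_mul_natDegree
      (Polynomial.C ((-1 : ℚ) ^ s) * Polynomial.X + Polynomial.C (N.choose (s + 1) : ℚ)) d
    rw [Polynomial.natDegree_linear (neg_one_pow_ne s),
      Polynomial.leadingCoeff_linear (neg_one_pow_ne s), mul_one] at hx
    exact hx
  rw [hc]
  have hsign : ((-1 : ℤˣ) ^ d) • (((-1 : ℚ) ^ s) ^ d *
      (if d ≤ s then (N.choose (s - d) : ℚ) else 0))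
      = (-1 : ℚ) ^ ((s + 1) * d) * (if d ≤ s then (N.choose (s - d) : ℚ) else 0) := by
    rw [Units.smul_def, zsmul_eq_mul, ← pow_mul]
    push_cast
    rw [← mul_assoc, ← pow_add]
    congr 2
    ring
  rw [Nat.add_sub_cancel, hsign]
  congr 1
  have hexp : ((s : ℤ) - 1) * d = ((s + 1) * d : ℕ) - ((2 * d : ℕ) : ℤ) := by
    push_cast; ring
  rw [hexp, zpow_sub₀ (by norm_num : (-1 : ℚ) ≠ 0), zpow_natCast, zpow_natCast]
  have h2d : (-1 : ℚ) ^ (2 * d) = 1 := by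
    rw [pow_mul, neg_one_sq, one_pow]
  rw [h2d, div_one]
end
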